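/- arXiv:1605.01791 — 4 statements merged into one kernel-verified Lean document; each statement's English description precedes it below -/
import Mathlib

section
/- Let (E, 𝓔, μ) be a probability space and let L be a bounded self-adjoint positive operator on the real Hilbert space L²(μ). Let (X_t)_{t≥0} be an E-valued, jointly measurable stochastic process on a probability space (Ω, P) such that for all bounded measurable h, k : E → ℝ and all s, t ≥ 0, E_P[h(X_s) k(X_t)] = ⟨h, exp(−|t−s| L) k⟩_{L²(μ)}, where exp denotes the operator exponential. Let f : E → ℝ be bounded measurable, let g : E → ℝ be a bounded measurable representative of L f ∈ L²(μ), and set M_t := f(X_t) − f(X_0) + ∫₀ᵗ g(X_s) ds. Then lim_{t→∞} (1/t) E_P[M_t²] = 2 ⟨f, L f⟩_{L²(μ)}. -/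
open MeasureTheory Filter
open scoped RealInnerProductSpace

private lemma vlm_integrable_of_bdd {α : Type*} [MeasurableSpace α] {Q : Measure α}
    [IsFiniteMeasure Q] {u : α → ℝ} (hm : AEStronglyMeasurable u Q) {C : ℝ}
    (hb : ∀ x, |u x| ≤ C) : Integrable u Q :=
  (integrable_const C).mono' hm (Eventually.of_forall (by simpa [Real.norm_eq_abs] using hb))

set_option maxHeartbeats 4000000 in
set_option synthInstance.maxHeartbeats 1000000 in
/-- For a reversible stationary Markov process with symmetric Markov semigroup `exp(-tL)`
(encoded by the two-time covariance formula), the martingale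
`M_t = f(X_t) - f(X_0) + ∫₀ᵗ (Lf)(X_s) ds` satisfies
`lim_{t → ∞} (1/t) E[M_t²] = 2 ⟨f, L f⟩`. -/
theorem variance_limit_of_martingale
    {E : Type*} [MeasurableSpace E] {μ : Measure E} [IsProbabilityMeasure μ]
    {Ω : Type*} [MeasurableSpace Ω] {P : Measure Ω} [IsProbabilityMeasure P]
    (L : Lp ℝ 2 μ →L[ℝ] Lp ℝ 2 μ)
    (hL_sym : ∀ u v : Lp ℝ 2 μ, ⟪L u, v⟫ = ⟪u, L v⟫)
    (hL_pos : ∀ u : Lp ℝ 2 μ, 0 ≤ ⟪u, L u⟫)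
    (X : ℝ → Ω → E)
    (hX_jointly_meas : Measurable (fun p : ℝ × Ω => X p.1 p.2))
    (hcov : ∀ (h k : E → ℝ), Measurable h → Measurable k →
      (∃ C, ∀ x, |h x| ≤ C) → (∃ C, ∀ x, |k x| ≤ C) →
      ∀ (hh2 : MemLp h 2 μ) (hk2 : MemLp k 2 μ) (s t : ℝ), 0 ≤ s → 0 ≤ t →
      ∫ ω, h (X s ω) * k (X t ω) ∂P
        = ⟪hh2.toLp h, NormedSpace.exp ((-|t - s|) • L) (hk2.toLp k)⟫)
    (f g : E → ℝ) (hf_meas : Measurable f) (hg_meas : Measurable g)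
    (hf_bdd : ∃ C, ∀ x, |f x| ≤ C) (hg_bdd : ∃ C, ∀ x, |g x| ≤ C)
    (hf2 : MemLp f 2 μ) (hg2 : MemLp g 2 μ)
    (hg_repr : hg2.toLp g = L (hf2.toLp f))
    (M : ℝ → Ω → ℝ)
    (hM : ∀ t ω, M t ω = f (X t ω) - f (X 0 ω) + ∫ s in (0:ℝ)..t, g (X s ω)) :
    Tendsto (fun t : ℝ => (1 / t) * ∫ ω, (M t ω) ^ 2 ∂P) atTop
      (nhds (2 * ⟪hf2.toLp f, L (hf2.toLp f)⟫)) := by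
  obtain ⟨Cf₀, hCf₀⟩ := hf_bdd
  obtain ⟨Cg₀, hCg₀⟩ := hg_bdd
  set Cf := |Cf₀| with hCfdef
  set Cg := |Cg₀| with hCgdef
  have hCf : ∀ x, |f x| ≤ Cf := fun x => (hCf₀ x).trans (le_abs_self _)
  have hCg : ∀ x, |g x| ≤ Cg := fun x => (hCg₀ x).trans (le_abs_self _)
  set F : Lp ℝ 2 μ := hf2.toLp f with hF
  set e : ℝ → (Lp ℝ 2 μ →L[ℝ] Lp ℝ 2 μ) := fun r => NormedSpace.exp ((-r) • L) with he
  -- operator facts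
  have e0 : e 0 = 1 := by simp [he, NormedSpace.exp_zero]
  have ederiv : ∀ r : ℝ, HasDerivAt e (-(e r * L)) r := by
    intro r
    have h := (hasDerivAt_exp_smul_const (𝕂 := ℝ) L (-r)).scomp r (hasDerivAt_neg r)
    exact (by simpa [neg_smul] using h :
      HasDerivAt ((fun u : ℝ => NormedSpace.exp (u • L)) ∘ (fun r => -r))
        (-(NormedSpace.exp ((-r) • L) * L)) r)
  have ecomm : ∀ r : ℝ, L * e r = e r * L := fun r =>
    ((Commute.refl L).smul_right (-r)).exp_right
  have econt : Continuous e :=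
    continuous_iff_continuousAt.2 fun r => (ederiv r).continuousAt
  -- scalar functions
  set φ : ℝ → ℝ := fun r => ⟪F, e r F⟫ with hφ
  set h : ℝ → ℝ := fun r => ⟪F, e r (L F)⟫ with hh
  set c : ℝ → ℝ := fun r => ⟪L F, e r (L F)⟫ with hc
  have happ : ∀ w : Lp ℝ 2 μ, Continuous fun r => e r w := fun w =>
    (ContinuousLinearMap.apply ℝ _ w).continuous.comp econt
  have hcont : Continuous h := continuous_const.inner (happ (L F))
  have ccont : Continuous c := continuous_const.inner (happ (L F))
  have φcont : Continuous φ := continuous_const.inner (happ F)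
  have ederiv_app : ∀ (r : ℝ) (w : Lp ℝ 2 μ),
      HasDerivAt (fun r => e r w) (-(e r (L w))) r := by
    intro r w
    have h1 := (ederiv r).clm_apply (hasDerivAt_const r w)
    simpa [ContinuousLinearMap.mul_apply] using h1
  have hLe : ∀ (r : ℝ) (w : Lp ℝ 2 μ), L (e r w) = e r (L w) := by
    intro r w
    have h1 := congrArg (fun T : Lp ℝ 2 μ →L[ℝ] Lp ℝ 2 μ => T w) (ecomm r)
    simpa [ContinuousLinearMap.mul_apply] using h1
  have hderiv : ∀ r : ℝ, HasDerivAt h (-(c r)) r := by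
    intro r
    have h2 : c r = ⟪F, e r (L (L F))⟫ := by
      show ⟪L F, e r (L F)⟫ = _
      rw [hL_sym F (e r (L F)), hLe]
    have h1 := (hasDerivAt_const r F).inner ℝ (ederiv_app r (L F))
    simp only [inner_zero_left, add_zero, ContinuousLinearMap.neg_apply,
      inner_neg_right] at h1
    rw [h2]
    exact h1
  have φderiv : ∀ r : ℝ, HasDerivAt φ (-(h r)) r := by
    intro r
    have h1 := (hasDerivAt_const r F).inner ℝ (ederiv_app r F)
    simp only [inner_zero_left, add_zero, ContinuousLinearMap.neg_apply,
      inner_neg_right] at h1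
    exact h1
  -- FTC
  have ftc_c : ∀ x : ℝ, (∫ r in (0:ℝ)..x, c r) = h 0 - h x := by
    intro x
    have h1 := intervalIntegral.integral_eq_sub_of_hasDerivAt
      (f := h) (f' := fun r => -(c r)) (a := 0) (b := x)
      (fun r _ => hderiv r) ((ccont.neg).intervalIntegrable _ _)
    rw [intervalIntegral.integral_neg] at h1
    linarith
  have ftc_h : ∀ x : ℝ, (∫ r in (0:ℝ)..x, h r) = φ 0 - φ x := by
    intro x
    have h1 := intervalIntegral.integral_eq_sub_of_hasDerivAt
      (f := φ) (f' := fun r => -(h r)) (a := 0) (b := x)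
      (fun r _ => φderiv r) ((hcont.neg).intervalIntegrable _ _)
    rw [intervalIntegral.integral_neg] at h1
    linarith
  -- measurability
  have Xm : ∀ t : ℝ, Measurable (X t) := fun t =>
    hX_jointly_meas.comp (measurable_const.prodMk measurable_id)
  have gXm : Measurable (fun p : Ω × ℝ => g (X p.2 p.1)) :=
    (hg_meas.comp hX_jointly_meas).comp measurable_swap
  -- covariance specializations
  have covff : ∀ s t : ℝ, 0 ≤ s → 0 ≤ t →
      (∫ ω, f (X s ω) * f (X t ω) ∂P) = φ |t - s| :=
    fun s t hs ht => hcov f f hf_meas hf_meas ⟨Cf, hCf⟩ ⟨Cf, hCf⟩ hf2 hf2 s t hs ht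
  have covfg : ∀ s t : ℝ, 0 ≤ s → 0 ≤ t →
      (∫ ω, f (X s ω) * g (X t ω) ∂P) = h |t - s| := by
    intro s t hs ht
    have h1 := hcov f g hf_meas hg_meas ⟨Cf, hCf⟩ ⟨Cg, hCg⟩ hf2 hg2 s t hs ht
    rwa [hg_repr] at h1
  have covgg : ∀ s t : ℝ, 0 ≤ s → 0 ≤ t →
      (∫ ω, g (X s ω) * g (X t ω) ∂P) = c |t - s| := by
    intro s t hs ht
    have h1 := hcov g g hg_meas hg_meas ⟨Cg, hCg⟩ ⟨Cg, hCg⟩ hg2 hg2 s t hs ht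
    rwa [hg_repr] at h1
  have h0F : h 0 = ⟪F, L F⟫ := by
    show ⟪F, e 0 (L F)⟫ = _
    rw [e0]
    simp
  -- main identity
  have main : ∀ t : ℝ, 0 < t → (∫ ω, (M t ω) ^ 2 ∂P) = 2 * t * ⟪F, L F⟫ := by
    intro t ht
    set ν : Measure ℝ := volume.restrict (Set.Ioc (0:ℝ) t) with hν
    have hνuniv : ν Set.univ = ENNReal.ofReal t := by
      rw [hν, Measure.restrict_apply_univ, Real.volume_Ioc, sub_zero]
    have hνfin : IsFiniteMeasure ν := ⟨by rw [hνuniv]; exact ENNReal.ofReal_lt_top⟩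
    set A : Ω → ℝ := fun ω => f (X t ω) - f (X 0 ω) with hA
    set B : Ω → ℝ := fun ω => ∫ s, g (X s ω) ∂ν with hB
    have hMeq : ∀ ω, M t ω = A ω + B ω := by
      intro ω
      rw [hM t ω, intervalIntegral.integral_of_le ht.le]
    have Am : Measurable A := (hf_meas.comp (Xm t)).sub (hf_meas.comp (Xm 0))
    have gXsm : StronglyMeasurable (fun p : Ω × ℝ => g (X p.2 p.1)) := gXm.stronglyMeasurable
    have Bm : StronglyMeasurable B := gXsm.integral_prod_right'
    have Abd : ∀ ω, |A ω| ≤ 2 * Cf := by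
      intro ω
      calc |A ω| ≤ |f (X t ω)| + |f (X 0 ω)| := abs_sub _ _
        _ ≤ Cf + Cf := add_le_add (hCf _) (hCf _)
        _ = 2 * Cf := by ring
    have Bbd : ∀ ω, |B ω| ≤ Cg * t := by
      intro ω
      have h1 : ‖∫ s, g (X s ω) ∂ν‖ ≤ Cg * (ν Set.univ).toReal :=
        norm_integral_le_of_norm_le_const
          (Eventually.of_forall fun s => by simpa [Real.norm_eq_abs] using hCg (X s ω))
      rw [hνuniv, ENNReal.toReal_ofReal ht.le] at h1
      simpa [Real.norm_eq_abs, hB] using h1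
    have hCf0 : (0:ℝ) ≤ Cf := abs_nonneg _
    -- integrabilities over Ω
    have intA2 : Integrable (fun ω => A ω ^ 2) P :=
      vlm_integrable_of_bdd ((Am.pow_const 2).aestronglyMeasurable) (C := (2*Cf)^2)
        (fun ω => by rw [abs_pow]; exact pow_le_pow_left₀ (abs_nonneg _) (Abd ω) 2)
    have intAB : Integrable (fun ω => A ω * B ω) P :=
      vlm_integrable_of_bdd ((Am.mul Bm.measurable).aestronglyMeasurable)
        (C := (2*Cf)*(Cg*t))
        (fun ω => by
          rw [abs_mul]
          exact mul_le_mul (Abd ω) (Bbd ω) (abs_nonneg _) (by positivity))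
    have intB2 : Integrable (fun ω => B ω ^ 2) P :=
      vlm_integrable_of_bdd (((Bm.measurable).pow_const 2).aestronglyMeasurable)
        (C := (Cg*t)^2)
        (fun ω => by rw [abs_pow]; exact pow_le_pow_left₀ (abs_nonneg _) (Bbd ω) 2)
    have intP : ∀ s u : ℝ, Integrable (fun ω => f (X s ω) * f (X u ω)) P := by
      intro s u
      apply vlm_integrable_of_bdd
        (((hf_meas.comp (Xm s)).mul (hf_meas.comp (Xm u))).aestronglyMeasurable)
        (C := Cf * Cf)
      intro ω
      rw [Pi.mul_apply, abs_mul]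
      exact mul_le_mul (hCf (X s ω)) (hCf (X u ω)) (abs_nonneg _)
        (le_trans (abs_nonneg (f (X s ω))) (hCf (X s ω)))
    have intPfg : ∀ s u : ℝ, Integrable (fun ω => f (X s ω) * g (X u ω)) P := by
      intro s u
      apply vlm_integrable_of_bdd
        (((hf_meas.comp (Xm s)).mul (hg_meas.comp (Xm u))).aestronglyMeasurable)
        (C := Cf * Cg)
      intro ω
      rw [Pi.mul_apply, abs_mul]
      exact mul_le_mul (hCf (X s ω)) (hCg (X u ω)) (abs_nonneg _)
        (le_trans (abs_nonneg (f (X s ω))) (hCf (X s ω)))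
    -- expansion
    have i2AB : Integrable (fun ω => 2 * (A ω * B ω)) P := intAB.const_mul 2
    have i12 : Integrable (fun ω => A ω ^ 2 + 2 * (A ω * B ω)) P := intA2.add i2AB
    have expand : (∫ ω, (M t ω) ^ 2 ∂P)
        = (∫ ω, A ω ^ 2 ∂P) + 2 * (∫ ω, A ω * B ω ∂P) + ∫ ω, B ω ^ 2 ∂P := by
      have h1 : (∫ ω, (M t ω) ^ 2 ∂P)
          = ∫ ω, (A ω ^ 2 + 2 * (A ω * B ω) + B ω ^ 2) ∂P := by
        apply integral_congr_ae
        filter_upwards with ω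
        rw [hMeq ω]; ring
      rw [h1, integral_add i12 intB2, integral_add intA2 i2AB, integral_const_mul]
    -- term 1
    have iP2 : Integrable (fun ω => 2 * (f (X t ω) * f (X 0 ω))) P := (intP t 0).const_mul 2
    have iP12 : Integrable
        (fun ω => f (X t ω) * f (X t ω) - 2 * (f (X t ω) * f (X 0 ω))) P :=
      (intP t t).sub iP2
    have term1 : (∫ ω, A ω ^ 2 ∂P) = 2 * φ 0 - 2 * φ t := by
      have h1 : (∫ ω, A ω ^ 2 ∂P)
          = ∫ ω, (f (X t ω) * f (X t ω) - 2 * (f (X t ω) * f (X 0 ω))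
              + f (X 0 ω) * f (X 0 ω)) ∂P := by
        apply integral_congr_ae
        filter_upwards with ω
        show A ω ^ 2 = _
        rw [hA]; ring
      rw [h1, integral_add iP12 (intP 0 0), integral_sub (intP t t) iP2,
        integral_const_mul, covff t t ht.le ht.le, covff t 0 ht.le le_rfl,
        covff 0 0 le_rfl le_rfl]
      have e1 : |t - t| = 0 := by simp
      have e2 : |(0:ℝ) - t| = t := by rw [zero_sub, abs_neg, abs_of_nonneg ht.le]
      have e3 : |(0:ℝ) - 0| = 0 := by simp
      rw [e1, e2, e3]; ring
    -- term 2 (cross term vanishes)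
    have intU1 : Integrable (Function.uncurry fun ω s => A ω * g (X s ω)) (P.prod ν) := by
      apply vlm_integrable_of_bdd (C := (2*Cf)*Cg)
        (((Am.comp measurable_fst).mul gXm).aestronglyMeasurable)
      intro p
      show |A p.1 * g (X p.2 p.1)| ≤ _
      rw [abs_mul]
      exact mul_le_mul (Abd p.1) (hCg (X p.2 p.1)) (abs_nonneg _) (by positivity)
    have ii_hts : IntervalIntegrable (fun s => h (t - s)) volume 0 t :=
      (hcont.comp (continuous_const.sub continuous_id)).intervalIntegrable _ _
    have ii_h : IntervalIntegrable h volume 0 t := hcont.intervalIntegrable _ _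
    have h4 : (∫ s in (0:ℝ)..t, h (t - s)) = ∫ s in (0:ℝ)..t, h s := by
      have h5 := intervalIntegral.integral_comp_sub_left (a := (0:ℝ)) (b := t) h t
      simpa using h5
    have term2 : (∫ ω, A ω * B ω ∂P) = 0 := by
      have h1 : (∫ ω, A ω * B ω ∂P) = ∫ ω, ∫ s, A ω * g (X s ω) ∂ν ∂P := by
        apply integral_congr_ae
        filter_upwards with ω
        show A ω * B ω = _
        rw [integral_const_mul]
      rw [h1, integral_integral_swap intU1]
      have h2 : (∫ s, (∫ ω, A ω * g (X s ω) ∂P) ∂ν)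
          = ∫ s in Set.Ioc (0:ℝ) t, (h (t - s) - h s) := by
        rw [hν]
        apply setIntegral_congr_fun measurableSet_Ioc
        intro s hs
        show (∫ ω, A ω * g (X s ω) ∂P) = h (t - s) - h s
        have hs0 : (0:ℝ) ≤ s := hs.1.le
        have hst : s ≤ t := hs.2
        have h3 : (∫ ω, A ω * g (X s ω) ∂P)
            = (∫ ω, f (X t ω) * g (X s ω) ∂P) - ∫ ω, f (X 0 ω) * g (X s ω) ∂P := by
          rw [← integral_sub (intPfg t s) (intPfg 0 s)]
          apply integral_congr_ae
          filter_upwards with ω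
          show A ω * g (X s ω) = _
          rw [hA]; ring
        rw [h3, covfg t s ht.le hs0, covfg 0 s le_rfl hs0]
        have e1 : |s - t| = t - s := by rw [abs_sub_comm, abs_of_nonneg (by linarith)]
        have e2 : |s - 0| = s := by rw [sub_zero, abs_of_nonneg hs0]
        rw [e1, e2]
      rw [h2, ← intervalIntegral.integral_of_le ht.le,
        intervalIntegral.integral_sub ii_hts ii_h, h4, sub_self]
    -- term 3
    have intU2 : Integrable (Function.uncurry fun ω s => B ω * g (X s ω)) (P.prod ν) := by
      apply vlm_integrable_of_bdd (C := (Cg*t)*Cg)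
        (((Bm.measurable.comp measurable_fst).mul gXm).aestronglyMeasurable)
      intro p
      show |B p.1 * g (X p.2 p.1)| ≤ _
      rw [abs_mul]
      exact mul_le_mul (Bbd p.1) (hCg (X p.2 p.1)) (abs_nonneg _) (by positivity)
    have intU3 : ∀ s : ℝ,
        Integrable (Function.uncurry fun ω u => g (X u ω) * g (X s ω)) (P.prod ν) := by
      intro s
      apply vlm_integrable_of_bdd (C := Cg*Cg)
        ((gXm.mul ((hg_meas.comp (Xm s)).comp measurable_fst)).aestronglyMeasurable)
      intro p
      show |g (X p.2 p.1) * g (X s p.1)| ≤ _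
      rw [abs_mul]
      exact mul_le_mul (hCg _) (hCg _) (abs_nonneg _)
        (le_trans (abs_nonneg (g (X p.2 p.1))) (hCg _))
    have term3 : (∫ ω, B ω ^ 2 ∂P) = 2 * t * h 0 - 2 * φ 0 + 2 * φ t := by
      have h1 : (∫ ω, B ω ^ 2 ∂P) = ∫ ω, ∫ s, B ω * g (X s ω) ∂ν ∂P := by
        apply integral_congr_ae
        filter_upwards with ω
        show B ω ^ 2 = _
        rw [integral_const_mul, ← pow_two]
      rw [h1, integral_integral_swap intU2]
      have h2 : (∫ s, (∫ ω, B ω * g (X s ω) ∂P) ∂ν)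
          = ∫ s in Set.Ioc (0:ℝ) t, (2 * h 0 - h s - h (t - s)) := by
        rw [hν]
        apply setIntegral_congr_fun measurableSet_Ioc
        intro s hs
        show (∫ ω, B ω * g (X s ω) ∂P) = 2 * h 0 - h s - h (t - s)
        have hs0 : (0:ℝ) ≤ s := hs.1.le
        have hst : s ≤ t := hs.2
        have e1 : (∫ ω, B ω * g (X s ω) ∂P)
            = ∫ ω, ∫ u, g (X u ω) * g (X s ω) ∂ν ∂P := by
          apply integral_congr_ae
          filter_upwards with ω
          show B ω * g (X s ω) = _
          rw [integral_mul_const]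
        rw [e1, integral_integral_swap (intU3 s)]
        have e2 : (∫ u, (∫ ω, g (X u ω) * g (X s ω) ∂P) ∂ν)
            = ∫ u in Set.Ioc (0:ℝ) t, c |s - u| := by
          rw [hν]
          apply setIntegral_congr_fun measurableSet_Ioc
          intro u hu
          exact covgg u s hu.1.le hs0
        rw [e2, ← intervalIntegral.integral_of_le ht.le]
        have ciac : Continuous fun u : ℝ => c |s - u| :=
          ccont.comp (continuous_abs.comp (continuous_const.sub continuous_id))
        have split : (∫ u in (0:ℝ)..t, c |s - u|)
            = (∫ u in (0:ℝ)..s, c |s - u|) + ∫ u in s..t, c |s - u| :=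
          (intervalIntegral.integral_add_adjacent_intervals
            (ciac.intervalIntegrable _ _) (ciac.intervalIntegrable _ _)).symm
        have part1 : (∫ u in (0:ℝ)..s, c |s - u|) = h 0 - h s := by
          have hc1 : (∫ u in (0:ℝ)..s, c |s - u|) = ∫ u in (0:ℝ)..s, c (s - u) := by
            apply intervalIntegral.integral_congr
            intro u hu
            rw [Set.uIcc_of_le hs0] at hu
            show c |s - u| = c (s - u)
            rw [abs_of_nonneg (by linarith [hu.2])]
          rw [hc1]
          have h5 := intervalIntegral.integral_comp_sub_left (a := (0:ℝ)) (b := s) c s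
          simpa [ftc_c s] using h5
        have part2 : (∫ u in s..t, c |s - u|) = h 0 - h (t - s) := by
          have hc1 : (∫ u in s..t, c |s - u|) = ∫ u in s..t, c (u - s) := by
            apply intervalIntegral.integral_congr
            intro u hu
            rw [Set.uIcc_of_le hst] at hu
            show c |s - u| = c (u - s)
            rw [abs_sub_comm, abs_of_nonneg (by linarith [hu.1])]
          rw [hc1]
          have h5 := intervalIntegral.integral_comp_sub_right (a := s) (b := t) c s
          simpa [ftc_c (t - s)] using h5
        rw [split, part1, part2]; ring
      rw [h2, ← intervalIntegral.integral_of_le ht.le]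
      have iiconst : IntervalIntegrable (fun _ : ℝ => 2 * h 0) volume 0 t :=
        continuous_const.intervalIntegrable _ _
      have ii1 : IntervalIntegrable (fun s => 2 * h 0 - h s) volume 0 t := iiconst.sub ii_h
      rw [intervalIntegral.integral_sub ii1 ii_hts,
        intervalIntegral.integral_sub iiconst ii_h,
        intervalIntegral.integral_const, ftc_h t, h4, ftc_h t]
      simp only [smul_eq_mul, sub_zero]
      ring
    rw [expand, term1, term2, term3, ← h0F]
    ring
  -- conclusion
  have hev : (fun t : ℝ => (1 / t) * ∫ ω, (M t ω) ^ 2 ∂P)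
      =ᶠ[atTop] (fun _ => 2 * ⟪F, L F⟫) := by
    filter_upwards [eventually_gt_atTop (0:ℝ)] with t ht
    rw [main t ht]
    field_simp
  exact Tendsto.congr' hev.symm tendsto_const_nhds
end

section
/- Let H be a real Hilbert space and L : H → H a bounded self-adjoint positive operator. Then for every f ∈ H, lim_{t→∞} (1/t) ∫₀ᵗ ∫₀ᵗ ⟨exp(−|s−r| L)(L f), L f⟩ dr ds = 2 ⟨f, L f⟩. -/
open Filter
open scoped RealInnerProductSpace

set_option synthInstance.maxHeartbeats 1000000
set_option maxHeartbeats 1000000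
set_option linter.unusedSectionVars false

section AuxSemigroup
variable {H : Type*} [NormedAddCommGroup H] [InnerProductSpace ℝ H] [CompleteSpace H]
  (L : H →L[ℝ] H)

noncomputable def expOpAux (u : ℝ) : H →L[ℝ] H := NormedSpace.exp ((-u) • L)

lemma expOpAux_zero : expOpAux L 0 = 1 := by
  simp [expOpAux, NormedSpace.exp_zero]

lemma expOpAux_comm (u : ℝ) (x : H) : expOpAux L u (L x) = L (expOpAux L u x) := by
  have h : Commute L (expOpAux L u) :=
    ((Commute.refl L).smul_right (-u)).exp_right
  have := congrArg (fun (A : H →L[ℝ] H) => A x) h.eq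
  simpa using this.symm

lemma expOpAux_symm (hL_sym : ∀ u v : H, ⟪L u, v⟫ = ⟪u, L v⟫) (u : ℝ) (x y : H) :
    ⟪expOpAux L u x, y⟫ = ⟪x, expOpAux L u y⟫ := by
  have hL : IsSelfAdjoint L :=
    ContinuousLinearMap.isSelfAdjoint_iff_isSymmetric.mpr (fun x y => hL_sym x y)
  have h : IsSelfAdjoint (expOpAux L u) :=
    (IsSelfAdjoint.smul (star_trivial (-u)) hL).exp
  exact (ContinuousLinearMap.isSelfAdjoint_iff_isSymmetric.mp h) x y

lemma expOpAux_half (u : ℝ) (x : H) :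
    expOpAux L u x = expOpAux L (u/2) (expOpAux L (u/2) x) := by
  have hc : Commute ((-(u/2)) • L) ((-(u/2)) • L) := Commute.refl _
  have : expOpAux L (u/2) * expOpAux L (u/2) = expOpAux L u := by
    rw [expOpAux, ← NormedSpace.exp_add_of_commute_of_mem_ball (𝕂 := ℝ) hc
      ((NormedSpace.expSeries_radius_eq_top ℝ (H →L[ℝ] H)).symm ▸ edist_lt_top _ _)
      ((NormedSpace.expSeries_radius_eq_top ℝ (H →L[ℝ] H)).symm ▸ edist_lt_top _ _)]
    congr 1
    rw [← add_smul]
    ring_nf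
  have := congrArg (fun (A : H →L[ℝ] H) => A x) this
  simpa using this.symm

lemma expOpAux_hasDerivAt (x : H) (u : ℝ) :
    HasDerivAt (fun u => expOpAux L u x) (-(expOpAux L u (L x))) u := by
  have h1 : HasDerivAt (fun s : ℝ => NormedSpace.exp (s • L))
      (NormedSpace.exp ((-u) • L) * L) (-u) := hasDerivAt_exp_smul_const L (-u)
  have h2 : HasDerivAt (fun u : ℝ => -u) (-1) u := hasDerivAt_neg u
  have h3 := h1.scomp u h2
  have h4 := h3.clm_apply (hasDerivAt_const u x)
  simpa [expOpAux] using h4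

noncomputable def innAux (x y : H) (u : ℝ) : ℝ := ⟪expOpAux L u x, y⟫

lemma innAux_hasDerivAt (x y : H) (u : ℝ) :
    HasDerivAt (innAux L x y) (-(innAux L (L x) y u)) u := by
  have := (expOpAux_hasDerivAt L x u).inner ℝ (hasDerivAt_const u y)
  simp [inner_neg_left] at this; exact this

lemma innAux_continuous (x y : H) : Continuous (innAux L x y) :=
  continuous_iff_continuousAt.2 fun u => (innAux_hasDerivAt L x y u).continuousAt

end AuxSemigroup

/-- Deterministic semigroup computation: for a bounded self-adjoint positive operator `L`
on a real Hilbert space, `lim_{t→∞} (1/t) ∫₀ᵗ∫₀ᵗ ⟨exp(-|s-r|L)(Lf), Lf⟩ dr ds = 2⟨f, Lf⟩`. -/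
theorem semigroup_double_integral_limit
    {H : Type*} [NormedAddCommGroup H] [InnerProductSpace ℝ H] [CompleteSpace H]
    (L : H →L[ℝ] H)
    (hL_sym : ∀ u v : H, ⟪L u, v⟫ = ⟪u, L v⟫)
    (hL_pos : ∀ u : H, 0 ≤ ⟪u, L u⟫)
    (f : H) :
    Tendsto (fun t : ℝ => (1 / t) * ∫ s in (0:ℝ)..t, ∫ r in (0:ℝ)..t,
        ⟪NormedSpace.exp ((-|s - r|) • L) (L f), L f⟫) atTop
      (nhds (2 * ⟪f, L f⟫)) := by
  -- notation
  set g : ℝ → ℝ := innAux L (L f) (L f) with hg_def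
  set φ : ℝ → ℝ := innAux L (L f) f with hφ_def
  set F : ℝ → ℝ := innAux L f f with hF_def
  have hg_cont : Continuous g := innAux_continuous L (L f) (L f)
  have hφ_cont : Continuous φ := innAux_continuous L (L f) f
  -- derivative of φ is -g
  have hφd : ∀ u, HasDerivAt φ (-(g u)) u := by
    intro u
    have h := innAux_hasDerivAt L (L f) f u
    have he : innAux L (L (L f)) f u = g u := by
      rw [hg_def, innAux, innAux, expOpAux_comm, hL_sym]
    rwa [he] at h
  have hFd : ∀ u, HasDerivAt F (-(φ u)) u := innAux_hasDerivAt L f f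
  -- positivity
  have hφ0 : ∀ u, 0 ≤ φ u := by
    intro u
    rw [hφ_def, innAux, expOpAux_half, expOpAux_symm L hL_sym, expOpAux_comm,
      real_inner_comm]
    exact hL_pos _
  have hF0 : ∀ u, 0 ≤ F u := by
    intro u
    rw [hF_def, innAux, expOpAux_half, expOpAux_symm L hL_sym]
    exact real_inner_self_nonneg
  have hφzero : φ 0 = ⟪f, L f⟫ := by
    rw [hφ_def, innAux, expOpAux_zero, real_inner_comm]
    rfl
  -- inner integral
  have hinner : ∀ t : ℝ, 0 ≤ t → ∀ s : ℝ, 0 ≤ s → s ≤ t →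
      (∫ r in (0:ℝ)..t, g |s - r|) = 2 * φ 0 - φ s - φ (t - s) := by
    intro t ht s hs hst
    have hcont : Continuous (fun r : ℝ => g |s - r|) :=
      hg_cont.comp (continuous_const.sub continuous_id).abs
    have hA : (∫ r in (0:ℝ)..s, g |s - r|) = φ 0 - φ s := by
      rw [intervalIntegral.integral_congr (g := fun r => g (s - r))
        (fun r hr => by
          rw [Set.uIcc_of_le hs] at hr
          rw [abs_of_nonneg (by linarith [hr.1, hr.2])])]
      have hd : ∀ r ∈ Set.uIcc (0:ℝ) s, HasDerivAt (fun r => φ (s - r)) (g (s - r)) r := by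
        intro r _
        have h2 : HasDerivAt (fun r : ℝ => s - r) (-1) r := by
          simpa using (hasDerivAt_id r).const_sub s
        have h3 := (hφd (s - r)).comp r h2
        simpa [Function.comp_def] using h3
      rw [intervalIntegral.integral_eq_sub_of_hasDerivAt hd
        ((hg_cont.comp (continuous_const.sub continuous_id)).intervalIntegrable _ _)]
      simp
    have hB : (∫ r in s..t, g |s - r|) = φ 0 - φ (t - s) := by
      rw [intervalIntegral.integral_congr (g := fun r => g (r - s))
        (fun r hr => by
          rw [Set.uIcc_of_le hst] at hr
          rw [abs_sub_comm, abs_of_nonneg (by linarith [hr.1, hr.2])])]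
      have hd : ∀ r ∈ Set.uIcc s t, HasDerivAt (fun r => -(φ (r - s))) (g (r - s)) r := by
        intro r _
        have h2 : HasDerivAt (fun r : ℝ => r - s) 1 r := (hasDerivAt_id r).sub_const s
        have h3 := ((hφd (r - s)).comp r h2).neg
        simpa [Function.comp_def, Pi.neg_def] using h3
      rw [intervalIntegral.integral_eq_sub_of_hasDerivAt hd
        ((hg_cont.comp (continuous_id.sub continuous_const)).intervalIntegrable _ _)]
      simp only [sub_self]
      ring
    rw [← intervalIntegral.integral_add_adjacent_intervals
      (hcont.intervalIntegrable 0 s) (hcont.intervalIntegrable s t), hA, hB]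
    ring
  -- ∫₀ᵗ φ = F 0 - F t
  have hφint : ∀ t : ℝ, (∫ u in (0:ℝ)..t, φ u) = F 0 - F t := by
    intro t
    have hd : ∀ u ∈ Set.uIcc (0:ℝ) t, HasDerivAt (fun u => -(F u)) (φ u) u := by
      intro u _
      simpa [Pi.neg_def] using (hFd u).neg
    rw [intervalIntegral.integral_eq_sub_of_hasDerivAt hd (hφ_cont.intervalIntegrable _ _)]
    ring
  -- outer integral
  have houter : ∀ t : ℝ, 0 ≤ t →
      (∫ s in (0:ℝ)..t, ∫ r in (0:ℝ)..t, g |s - r|)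
        = t * (2 * φ 0) - 2 * (F 0 - F t) := by
    intro t ht
    have h1 : (∫ s in (0:ℝ)..t, ∫ r in (0:ℝ)..t, g |s - r|)
        = ∫ s in (0:ℝ)..t, (2 * φ 0 - φ s - φ (t - s)) := by
      refine intervalIntegral.integral_congr fun s hs => ?_
      rw [Set.uIcc_of_le ht] at hs
      exact hinner t ht s hs.1 hs.2
    have hφi : IntervalIntegrable φ MeasureTheory.volume 0 t := hφ_cont.intervalIntegrable _ _
    have hφi2 : IntervalIntegrable (fun s => φ (t - s)) MeasureTheory.volume 0 t :=
      (hφ_cont.comp (continuous_const.sub continuous_id)).intervalIntegrable _ _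
    have h3 : (∫ s in (0:ℝ)..t, φ (t - s)) = ∫ s in (0:ℝ)..t, φ s := by
      rw [intervalIntegral.integral_comp_sub_left]
      norm_num
    rw [h1, intervalIntegral.integral_sub ((intervalIntegrable_const).sub hφi) hφi2,
      intervalIntegral.integral_sub intervalIntegrable_const hφi,
      intervalIntegral.integral_const, h3, hφint t]
    simp only [smul_eq_mul, sub_zero]
    ring
  -- limit
  have hR : Tendsto (fun t : ℝ => (F 0 - F t) / t) atTop (nhds 0) := by
    apply squeeze_zero' (t₀ := atTop) (g := fun t => F 0 / t)
    · filter_upwards [eventually_gt_atTop (0:ℝ)] with t ht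
      have h1 : 0 ≤ F 0 - F t := by rw [← hφint t]; exact
        intervalIntegral.integral_nonneg ht.le (fun u _ => hφ0 u)
      positivity
    · filter_upwards [eventually_gt_atTop (0:ℝ)] with t ht
      have h2 : F 0 - F t ≤ F 0 := by linarith [hF0 t]
      gcongr
    · exact tendsto_const_nhds.div_atTop tendsto_id
  have hfinal : Tendsto (fun t : ℝ => 2 * φ 0 - 2 * ((F 0 - F t) / t)) atTop
      (nhds (2 * ⟪f, L f⟫)) := by
    have h := tendsto_const_nhds (x := 2 * φ 0) (f := atTop (α := ℝ)) |>.sub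
      (hR.const_mul 2)
    simpa [hφzero] using h
  refine hfinal.congr' ?_
  filter_upwards [eventually_gt_atTop (0:ℝ)] with t ht
  have hrw : (∫ s in (0:ℝ)..t, ∫ r in (0:ℝ)..t,
      ⟪NormedSpace.exp ((-|s - r|) • L) (L f), L f⟫)
      = ∫ s in (0:ℝ)..t, ∫ r in (0:ℝ)..t, g |s - r| := rfl
  rw [hrw, houter t ht.le]
  field_simp
end

section
/- Let H be a real Hilbert space, L : H → H a bounded self-adjoint operator, g ∈ H and t ≥ 0. Then ∫₀ᵗ ∫₀ᵗ ⟨exp(−|s−r| L) g, g⟩ dr ds = 4 ∫₀^{t/2} (t − 2s) ‖exp(−s L) g‖² ds. -/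
open scoped RealInnerProductSpace
open intervalIntegral NormedSpace Set

/-- General identity: for continuous `f`,
`∫₀ᵗ∫₀ᵗ f|s-r| dr ds = 2 ∫₀ᵗ (t-u) f u du`. -/
lemma aux_double_integral {f : ℝ → ℝ} (hf : Continuous f) (t : ℝ) (ht : 0 ≤ t) :
    ∫ s in (0:ℝ)..t, ∫ r in (0:ℝ)..t, f |s - r|
      = 2 * ∫ u in (0:ℝ)..t, (t - u) * f u := by
  set F : ℝ → ℝ := fun x => ∫ u in (0:ℝ)..x, f u with hF
  have hFderiv : ∀ x : ℝ, HasDerivAt F (f x) x := fun x =>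
    integral_hasDerivAt_right (hf.intervalIntegrable 0 x)
      (hf.stronglyMeasurableAtFilter _ _) hf.continuousAt
  have hFcont : Continuous F :=
    continuous_primitive (fun a b => hf.intervalIntegrable a b) 0
  -- inner integral
  have hinner : ∀ s ∈ Set.uIcc (0:ℝ) t,
      (∫ r in (0:ℝ)..t, f |s - r|) = F s + F (t - s) := by
    intro s hs
    rw [Set.uIcc_of_le ht] at hs
    obtain ⟨hs0, hst⟩ := hs
    have h1 : (∫ r in (0:ℝ)..s, f |s - r|) = F s := by
      have : (∫ r in (0:ℝ)..s, f |s - r|) = ∫ r in (0:ℝ)..s, f (s - r) := by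
        apply integral_congr
        intro r hr
        rw [Set.uIcc_of_le hs0] at hr
        show f |s - r| = f (s - r)
        rw [abs_of_nonneg (sub_nonneg.mpr hr.2)]
      rw [this, integral_comp_sub_left f s, sub_self, sub_zero]
    have h2 : (∫ r in s..t, f |s - r|) = F (t - s) := by
      have : (∫ r in s..t, f |s - r|) = ∫ r in s..t, f (r - s) := by
        apply integral_congr
        intro r hr
        rw [Set.uIcc_of_le hst] at hr
        show f |s - r| = f (r - s)
        rw [abs_sub_comm, abs_of_nonneg (sub_nonneg.mpr hr.1)]
      rw [this, integral_comp_sub_right f s, sub_self]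
    calc (∫ r in (0:ℝ)..t, f |s - r|)
        = (∫ r in (0:ℝ)..s, f |s - r|) + ∫ r in s..t, f |s - r| := by
          rw [integral_add_adjacent_intervals] <;>
            exact ((hf.comp (continuous_abs.comp
              ((continuous_const).sub continuous_id))).intervalIntegrable _ _)
      _ = F s + F (t - s) := by rw [h1, h2]
  rw [integral_congr hinner]
  have hsplit : (∫ s in (0:ℝ)..t, (F s + F (t - s)))
      = (∫ s in (0:ℝ)..t, F s) + ∫ s in (0:ℝ)..t, F (t - s) := by
    apply integral_add (hFcont.intervalIntegrable _ _)
      ((hFcont.comp ((continuous_const).sub continuous_id)).intervalIntegrable _ _)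
  have hrefl : (∫ s in (0:ℝ)..t, F (t - s)) = ∫ s in (0:ℝ)..t, F s := by
    rw [integral_comp_sub_left F t, sub_self, sub_zero]
  -- integration by parts: ∫ (t-s) f s = ∫ F
  have hparts : (∫ u in (0:ℝ)..t, (t - u) * f u) = ∫ s in (0:ℝ)..t, F s := by
    have := integral_mul_deriv_eq_deriv_mul
      (u := fun s : ℝ => t - s) (u' := fun _ => (-1 : ℝ)) (v := F) (v' := f)
      (a := 0) (b := t)
      (fun x _ => (hasDerivAt_id x).const_sub t)
      (fun x _ => hFderiv x)
      ((continuous_const).intervalIntegrable _ _)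
      (hf.intervalIntegrable _ _)
    have hF0 : F 0 = 0 := integral_same
    rw [this]
    simp [hF0, integral_neg]
  rw [hsplit, hrefl, hparts]
  ring

/-- For a bounded self-adjoint operator `L` on a real Hilbert space and `g ∈ H`, `t ≥ 0`:
`∫₀ᵗ∫₀ᵗ ⟨exp(-|s-r|L) g, g⟩ dr ds = 4 ∫₀^{t/2} (t - 2s) ‖exp(-sL) g‖² ds`. -/
theorem double_integral_semigroup_identity
    {H : Type*} [NormedAddCommGroup H] [InnerProductSpace ℝ H] [CompleteSpace H]
    (L : H →L[ℝ] H)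
    (hL_sym : ∀ u v : H, ⟪L u, v⟫ = ⟪u, L v⟫)
    (g : H) (t : ℝ) (ht : 0 ≤ t) :
    ∫ s in (0:ℝ)..t, ∫ r in (0:ℝ)..t, ⟪NormedSpace.exp ((-|s - r|) • L) g, g⟫
      = 4 * ∫ s in (0:ℝ)..(t / 2), (t - 2 * s) * ‖NormedSpace.exp ((-s) • L) g‖ ^ 2 := by
  have hLsa : IsSelfAdjoint L :=
    ContinuousLinearMap.isSelfAdjoint_iff_isSymmetric.mpr (fun u v => hL_sym u v)
  have hsa : ∀ c : ℝ, IsSelfAdjoint (exp (c • L)) := fun c => by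
    have h : IsSelfAdjoint (c • L) := by
      rw [IsSelfAdjoint, star_smul, star_trivial, hLsa.star_eq]
    rw [IsSelfAdjoint, star_exp, h.star_eq]
  set f : ℝ → ℝ := fun u => ⟪exp ((-u) • L) g, g⟫ with hfdef
  let +nondep : NormedAlgebra ℚ (H →L[ℝ] H) := .restrictScalars ℚ ℝ (H →L[ℝ] H)
  have hfcont : Continuous f := by
    have h1 : Continuous fun u : ℝ => exp ((-u) • L) :=
      exp_continuous.comp (continuous_neg.smul continuous_const)
    exact (h1.clm_apply continuous_const).inner continuous_const
  have hfval : ∀ u : ℝ, f u = ‖exp ((-(u / 2)) • L) g‖ ^ 2 := by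
    intro u
    have hsplit : (-u) • L = (-(u / 2)) • L + (-(u / 2)) • L := by
      rw [← add_smul]; ring_nf
    have hexp : exp ((-u) • L)
        = exp ((-(u / 2)) • L) * exp ((-(u / 2)) • L) := by
      rw [hsplit, exp_add_of_commute (Commute.refl _)]
    have hsym := (ContinuousLinearMap.isSelfAdjoint_iff_isSymmetric.mp
      (hsa (-(u / 2)))) (exp ((-(u / 2)) • L) g) g
    calc f u = ⟪exp ((-(u / 2)) • L) (exp ((-(u / 2)) • L) g), g⟫ := by
          rw [hfdef]; simp only [hexp, ContinuousLinearMap.mul_apply]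
      _ = ⟪exp ((-(u / 2)) • L) g, exp ((-(u / 2)) • L) g⟫ := hsym
      _ = ‖exp ((-(u / 2)) • L) g‖ ^ 2 := real_inner_self_eq_norm_sq _
  have key := aux_double_integral hfcont t ht
  -- change of variables on RHS
  have hcov : (∫ s in (0:ℝ)..(t / 2), (t - 2 * s) * ‖exp ((-s) • L) g‖ ^ 2)
      = (2 : ℝ)⁻¹ • ∫ u in (0:ℝ)..t, (t - u) * f u := by
    have h1 : ∀ s ∈ Set.uIcc (0:ℝ) (t / 2), (t - 2 * s) * ‖exp ((-s) • L) g‖ ^ 2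
        = (fun u => (t - u) * f u) (2 * s) := by
      intro s _
      have h2 : f (2 * s) = ‖exp ((-s) • L) g‖ ^ 2 := by
        rw [hfval (2 * s)]
        norm_num
      simp [h2]
    rw [integral_congr h1, integral_comp_mul_left (fun u => (t - u) * f u) two_ne_zero,
      mul_zero, show (2:ℝ) * (t / 2) = t by ring]
  rw [hcov]
  simp only [hfdef] at key
  rw [key, smul_eq_mul]
  ring
end

section
/- Let H be a real Hilbert space, L : H → H a bounded self-adjoint operator, g ∈ H and t ≥ 0. Then 2t ∫₀^{t/4} ‖exp(−s L) g‖² ds ≤ ∫₀ᵗ ∫₀ᵗ ⟨exp(−|s−r| L) g, g⟩ dr ds ≤ 4t ∫₀^{t/2} ‖exp(−s L) g‖² ds. -/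
open scoped RealInnerProductSpace

section aux

variable {H : Type*} [NormedAddCommGroup H] [InnerProductSpace ℝ H] [CompleteSpace H]

/-- `exp (c • L)` is symmetric when `L` is self-adjoint. -/
lemma exp_smul_symm_aux (L : H →L[ℝ] H) (hL : IsSelfAdjoint L) (c : ℝ) (u v : H) :
    ⟪NormedSpace.exp (c • L) u, v⟫ = ⟪u, NormedSpace.exp (c • L) v⟫ := by
  have h : IsSelfAdjoint (NormedSpace.exp (c • L)) :=
    ((IsSelfAdjoint.all c).smul hL).exp
  exact ContinuousLinearMap.isSelfAdjoint_iff_isSymmetric.mp h u v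

/-- The semigroup correlation as a squared norm at half time. -/
lemma inner_exp_eq_sq_norm_aux (L : H →L[ℝ] H) (hL : IsSelfAdjoint L) (g : H) (a : ℝ) :
    ⟪NormedSpace.exp ((-a) • L) g, g⟫ = ‖NormedSpace.exp ((-(a / 2)) • L) g‖ ^ 2 := by
  have hsplit : (-a) • L = (-(a / 2)) • L + (-(a / 2)) • L := by
    rw [← add_smul]; ring_nf
  let +nondep : NormedAlgebra ℚ (H →L[ℝ] H) := .restrictScalars ℚ ℝ _
  rw [hsplit, NormedSpace.exp_add_of_commute (Commute.refl _)]
  have happ : (NormedSpace.exp ((-(a / 2)) • L) * NormedSpace.exp ((-(a / 2)) • L)) g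
      = NormedSpace.exp ((-(a / 2)) • L) (NormedSpace.exp ((-(a / 2)) • L) g) := rfl
  rw [happ, exp_smul_symm_aux L hL, real_inner_self_eq_norm_sq]

end aux

/-- Two-sided bounds for the double time integral of the symmetric semigroup correlation:
`2t ∫₀^{t/4} ‖exp(-sL) g‖² ds ≤ ∫₀ᵗ∫₀ᵗ ⟨exp(-|s-r|L) g, g⟩ dr ds ≤ 4t ∫₀^{t/2} ‖exp(-sL) g‖² ds`. -/
theorem double_integral_semigroup_bounds
    {H : Type*} [NormedAddCommGroup H] [InnerProductSpace ℝ H] [CompleteSpace H]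
    (L : H →L[ℝ] H)
    (hL_sym : ∀ u v : H, ⟪L u, v⟫ = ⟪u, L v⟫)
    (g : H) (t : ℝ) (ht : 0 ≤ t) :
    2 * t * (∫ s in (0:ℝ)..(t / 4), ‖NormedSpace.exp ((-s) • L) g‖ ^ 2)
        ≤ ∫ s in (0:ℝ)..t, ∫ r in (0:ℝ)..t, ⟪NormedSpace.exp ((-|s - r|) • L) g, g⟫ ∧
      (∫ s in (0:ℝ)..t, ∫ r in (0:ℝ)..t, ⟪NormedSpace.exp ((-|s - r|) • L) g, g⟫)
        ≤ 4 * t * ∫ s in (0:ℝ)..(t / 2), ‖NormedSpace.exp ((-s) • L) g‖ ^ 2 := by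
  have hL : IsSelfAdjoint L :=
    LinearMap.IsSymmetric.isSelfAdjoint (fun u v => hL_sym u v)
  -- the squared norm function
  set ψ : ℝ → ℝ := fun s => ‖NormedSpace.exp ((-s) • L) g‖ ^ 2 with hψdef
  -- the correlation function
  set f : ℝ → ℝ := fun u => ⟪NormedSpace.exp ((-|u|) • L) g, g⟫ with hfdef
  have hψc : Continuous ψ := by
    let +nondep : NormedAlgebra ℚ (H →L[ℝ] H) := .restrictScalars ℚ ℝ _
    apply Continuous.pow
    apply Continuous.norm
    exact ((NormedSpace.exp_continuous).comp
      ((continuous_neg).smul continuous_const)).clm_apply continuous_const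
  have hfψ : ∀ u : ℝ, f u = ψ (|u| / 2) := fun u =>
    inner_exp_eq_sq_norm_aux L hL g |u|
  have hfc : Continuous f := by
    have : f = fun u => ψ (|u| / 2) := funext hfψ
    rw [this]
    exact hψc.comp ((continuous_abs).div_const 2)
  have hψ0 : ∀ s : ℝ, 0 ≤ ψ s := fun s => sq_nonneg _
  have hf0 : ∀ u : ℝ, 0 ≤ f u := fun u => (hfψ u) ▸ hψ0 (|u| / 2)
  have hfint : ∀ a b : ℝ, IntervalIntegrable f MeasureTheory.volume a b :=
    fun a b => hfc.intervalIntegrable a b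
  -- scaling: ∫₀ᵃ f = 2 ∫₀^{a/2} ψ  for a ≥ 0
  have hscale : ∀ a : ℝ, 0 ≤ a →
      (∫ u in (0:ℝ)..a, f u) = 2 * ∫ v in (0:ℝ)..(a / 2), ψ v := by
    intro a ha
    have key := intervalIntegral.integral_comp_div (a := 0) (b := a) (c := 2)
      (fun x => ψ |x|) two_ne_zero
    have h1 : (∫ u in (0:ℝ)..a, f u) = ∫ u in (0:ℝ)..a, (fun x => ψ |x|) (u / 2) := by
      apply intervalIntegral.integral_congr
      intro u _
      simp only [hfψ u, abs_div, abs_two]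
    rw [h1, key, smul_eq_mul, zero_div]
    congr 1
    apply intervalIntegral.integral_congr
    intro v hv
    rw [Set.uIcc_of_le (by linarith : (0:ℝ) ≤ a / 2)] at hv
    show ψ |v| = ψ v
    rw [abs_of_nonneg hv.1]
  -- monotonicity of the primitive
  have hmono : ∀ x y : ℝ, x ≤ y → (∫ u in (0:ℝ)..x, f u) ≤ ∫ u in (0:ℝ)..y, f u := by
    intro x y hxy
    have := intervalIntegral.integral_add_adjacent_intervals (hfint 0 x) (hfint x y)
    have hpos : 0 ≤ ∫ u in x..y, f u :=
      intervalIntegral.integral_nonneg hxy fun u _ => hf0 u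
    linarith
  have hprim0 : ∀ x : ℝ, 0 ≤ ∫ u in (0:ℝ)..x, f u → True := fun _ _ => trivial
  -- the inner integral
  set G : ℝ → ℝ := fun s => (∫ u in (0:ℝ)..s, f u) + ∫ u in (0:ℝ)..(t - s), f u with hGdef
  have hinner : ∀ s : ℝ,
      (∫ r in (0:ℝ)..t, ⟪NormedSpace.exp ((-|s - r|) • L) g, g⟫) = G s := by
    intro s
    have hI : (∫ r in (0:ℝ)..t, f (s - r))
        = (∫ r in (0:ℝ)..s, f (s - r)) + ∫ r in s..t, f (s - r) := by
      refine (intervalIntegral.integral_add_adjacent_intervals ?_ ?_).symm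
      · exact (hfc.comp (continuous_const.sub continuous_id)).intervalIntegrable _ _
      · exact (hfc.comp (continuous_const.sub continuous_id)).intervalIntegrable _ _
    have h1 : (∫ r in (0:ℝ)..s, f (s - r)) = ∫ u in (0:ℝ)..s, f u := by
      rw [intervalIntegral.integral_comp_sub_left f s, sub_self, sub_zero]
    have h2 : (∫ r in s..t, f (s - r)) = ∫ u in (0:ℝ)..(t - s), f u := by
      have he : ∀ r : ℝ, f (s - r) = f (r - s) := by
        intro r
        simp only [hfdef, abs_sub_comm s r]
      simp only [he]
      rw [intervalIntegral.integral_comp_sub_right f s, sub_self]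
    calc (∫ r in (0:ℝ)..t, ⟪NormedSpace.exp ((-|s - r|) • L) g, g⟫)
        = ∫ r in (0:ℝ)..t, f (s - r) := rfl
      _ = (∫ r in (0:ℝ)..s, f (s - r)) + ∫ r in s..t, f (s - r) := hI
      _ = (∫ u in (0:ℝ)..s, f u) + ∫ u in (0:ℝ)..(t - s), f u := by rw [h1, h2]
  have hGcont : Continuous G := by
    have hp : Continuous fun x : ℝ => ∫ u in (0:ℝ)..x, f u :=
      intervalIntegral.continuous_primitive hfint 0
    exact hp.add (hp.comp (continuous_const.sub continuous_id))
  -- rewrite the double integral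
  have hdouble : (∫ s in (0:ℝ)..t, ∫ r in (0:ℝ)..t, ⟪NormedSpace.exp ((-|s - r|) • L) g, g⟫)
      = ∫ s in (0:ℝ)..t, G s := by
    apply intervalIntegral.integral_congr
    intro s _
    exact hinner s
  rw [hdouble]
  constructor
  · -- lower bound
    have hlow : ∀ s ∈ Set.Icc (0:ℝ) t, (∫ u in (0:ℝ)..(t / 2), f u) ≤ G s := by
      intro s hs
      rcases le_total s (t / 2) with hcase | hcase
      · have h1 : (∫ u in (0:ℝ)..(t / 2), f u) ≤ ∫ u in (0:ℝ)..(t - s), f u :=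
          hmono _ _ (by linarith [hs.2])
        have h2 : 0 ≤ ∫ u in (0:ℝ)..s, f u :=
          intervalIntegral.integral_nonneg hs.1 fun u _ => hf0 u
        simp only [hGdef]; linarith
      · have h1 : (∫ u in (0:ℝ)..(t / 2), f u) ≤ ∫ u in (0:ℝ)..s, f u := hmono _ _ hcase
        have h2 : 0 ≤ ∫ u in (0:ℝ)..(t - s), f u :=
          intervalIntegral.integral_nonneg (by linarith [hs.2]) fun u _ => hf0 u
        simp only [hGdef]; linarith
    have hle : (∫ _ in (0:ℝ)..t, (∫ u in (0:ℝ)..(t / 2), f u)) ≤ ∫ s in (0:ℝ)..t, G s := by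
      apply intervalIntegral.integral_mono_on ht
        (intervalIntegrable_const) (hGcont.intervalIntegrable 0 t) hlow
    rw [intervalIntegral.integral_const, smul_eq_mul, sub_zero] at hle
    have hs2 : (∫ u in (0:ℝ)..(t / 2), f u) = 2 * ∫ v in (0:ℝ)..(t / 4), ψ v := by
      rw [hscale (t / 2) (by linarith), show t / 2 / 2 = t / 4 from by ring]
    rw [hs2] at hle
    calc 2 * t * (∫ s in (0:ℝ)..(t / 4), ‖NormedSpace.exp ((-s) • L) g‖ ^ 2)
        = t * (2 * ∫ v in (0:ℝ)..(t / 4), ψ v) := by rw [hψdef]; ring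
      _ ≤ ∫ s in (0:ℝ)..t, G s := hle
  · -- upper bound
    have hup : ∀ s ∈ Set.Icc (0:ℝ) t, G s ≤ 2 * ∫ u in (0:ℝ)..t, f u := by
      intro s hs
      have h1 : (∫ u in (0:ℝ)..s, f u) ≤ ∫ u in (0:ℝ)..t, f u := hmono _ _ hs.2
      have h2 : (∫ u in (0:ℝ)..(t - s), f u) ≤ ∫ u in (0:ℝ)..t, f u :=
        hmono _ _ (by linarith [hs.1])
      simp only [hGdef]; linarith
    have hle : (∫ s in (0:ℝ)..t, G s) ≤ ∫ _ in (0:ℝ)..t, (2 * ∫ u in (0:ℝ)..t, f u) := by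
      apply intervalIntegral.integral_mono_on ht
        (hGcont.intervalIntegrable 0 t) (intervalIntegrable_const) hup
    rw [intervalIntegral.integral_const, smul_eq_mul, sub_zero] at hle
    have hs2 : (∫ u in (0:ℝ)..t, f u) = 2 * ∫ v in (0:ℝ)..(t / 2), ψ v := hscale t ht
    rw [hs2] at hle
    calc (∫ s in (0:ℝ)..t, G s)
        ≤ t * (2 * (2 * ∫ v in (0:ℝ)..(t / 2), ψ v)) := hle
      _ = 4 * t * ∫ s in (0:ℝ)..(t / 2), ‖NormedSpace.exp ((-s) • L) g‖ ^ 2 := by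
          rw [hψdef]; ring
end
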